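/- arXiv:2007.14148 — 3 statements merged into one kernel-verified Lean document; each statement's English description precedes it below -/
import Mathlib

section
/- In the genus-3 surface group π₁(S₃) = ⟨a₁,b₁,a₂,b₂,a₃,b₃ ∣ [a₁,b₁][a₂,b₂][a₃,b₃] = 1⟩, the subgroup H generated by the images of a₁, b₁, a₂, b₂ is freely generated by these four elements, but H is not an elementarily embedded subgroup of π₁(S₃): the element [a₁,b₁][a₂,b₂] is a commutator in π₁(S₃) but not in H. -/
open FirstOrder
open scoped commutatorElement

/-- Function symbols of the first-order language of groups:
a binary multiplication, a unary inversion, and a constant for the identity. -/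
inductive GroupFunc : ℕ → Type
  | mul : GroupFunc 2
  | inv : GroupFunc 1
  | one : GroupFunc 0

/-- The first-order language of groups. -/
def groupLang : Language where
  Functions := GroupFunc
  Relations _ := Empty

/-- Every group is a structure for the language of groups in the natural way. -/
instance groupLangStructure (G : Type*) [Group G] : groupLang.Structure G where
  funMap {n} f x :=
    match f with
    | .mul => x 0 * x 1
    | .inv => (x 0)⁻¹
    | .one => 1
  RelMap {n} r _ := r.elim

/-- A subgroup `H` of a group `G` is *elementarily embedded* if for every first-order
formula `φ(x₁,…,xₙ)` in the language of groups and all `a₁,…,aₙ ∈ H`, the formula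
`φ(a₁,…,aₙ)` holds in `H` if and only if it holds in `G`. -/
def Subgroup.IsElementarilyEmbedded {G : Type*} [Group G] (H : Subgroup G) : Prop :=
  ∀ (n : ℕ) (φ : groupLang.Formula (Fin n)) (a : Fin n → H),
    φ.Realize a ↔ φ.Realize (fun i => (a i : G))

/-- The surface relator `[a₁,b₁]⋯[a_g,b_g]` in the free group on generators
`a₁,…,a_g` (the `Sum.inl` generators) and `b₁,…,b_g` (the `Sum.inr` generators),
where `⁅a,b⁆ = a*b*a⁻¹*b⁻¹`. -/
def orientableSurfaceRelator (g : ℕ) : FreeGroup (Fin g ⊕ Fin g) :=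
  (List.ofFn fun i : Fin g =>
    ⁅FreeGroup.of (Sum.inl i : Fin g ⊕ Fin g), FreeGroup.of (Sum.inr i : Fin g ⊕ Fin g)⁆).prod

/-- The fundamental group `π₁(S_g) = ⟨a₁,b₁,…,a_g,b_g ∣ [a₁,b₁]⋯[a_g,b_g] = 1⟩` of the
closed orientable surface of genus `g`. -/
abbrev OrientableSurfaceGroup (g : ℕ) : Type :=
  PresentedGroup ({orientableSurfaceRelator g} : Set (FreeGroup (Fin g ⊕ Fin g)))

/-- The images of the generators `a₁, b₁, a₂, b₂` in `π₁(S₃)`. -/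
def S3a1 : OrientableSurfaceGroup 3 := PresentedGroup.of (Sum.inl 0)

def S3b1 : OrientableSurfaceGroup 3 := PresentedGroup.of (Sum.inr 0)

def S3a2 : OrientableSurfaceGroup 3 := PresentedGroup.of (Sum.inl 1)

def S3b2 : OrientableSurfaceGroup 3 := PresentedGroup.of (Sum.inr 1)

@[simp] theorem funMap_mul {G : Type*} [Group G] (x : Fin 2 → G) :
    Language.Structure.funMap (L := groupLang) GroupFunc.mul x = x 0 * x 1 := rfl
@[simp] theorem funMap_inv {G : Type*} [Group G] (x : Fin 1 → G) :
    Language.Structure.funMap (L := groupLang) GroupFunc.inv x = (x 0)⁻¹ := rfl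

/-- term u * v * u⁻¹ * v⁻¹ on bound variables -/
def commTerm : groupLang.Term (Fin 1 ⊕ Fin 2) :=
  Language.Term.func GroupFunc.mul
    ![Language.Term.func GroupFunc.mul
        ![Language.Term.func GroupFunc.mul
            ![Language.Term.var (Sum.inr 0), Language.Term.var (Sum.inr 1)],
          Language.Term.func GroupFunc.inv ![Language.Term.var (Sum.inr 0)] ],
      Language.Term.func GroupFunc.inv ![Language.Term.var (Sum.inr 1)] ]

def commFormula : groupLang.Formula (Fin 1) :=
  ((Language.Term.var (Sum.inl 0) : groupLang.Term (Fin 1 ⊕ Fin 2)).bdEqual commTerm).ex.ex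

theorem commFormula_realize {G : Type*} [Group G] (c : G) :
    commFormula.Realize (fun _ : Fin 1 => c) ↔ ∃ u v : G, c = u * v * u⁻¹ * v⁻¹ := by
  simp only [commFormula, Language.Formula.Realize, Language.BoundedFormula.realize_ex,
    Language.BoundedFormula.realize_bdEqual, Language.Term.realize_var,
    Language.Term.realize_func, commTerm]
  constructor
  · rintro ⟨u, v, h⟩
    refine ⟨u, v, ?_⟩
    exact h
  · rintro ⟨u, v, h⟩
    refine ⟨u, v, ?_⟩
    exact h

/-- 2-step nilpotent group: ℤ⁴ × (4×4 integer matrices) with outer-product cocycle. -/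
@[ext] structure NN where
  v : Fin 4 → ℤ
  m : Fin 4 → Fin 4 → ℤ

instance : Mul NN := ⟨fun x y => ⟨x.v + y.v, x.m + y.m + fun i j => x.v i * y.v j⟩⟩
instance : One NN := ⟨⟨0, 0⟩⟩
instance : Inv NN := ⟨fun x => ⟨-x.v, -x.m + fun i j => x.v i * x.v j⟩⟩

@[simp] theorem NN.mul_v (x y : NN) : (x * y).v = x.v + y.v := rfl
@[simp] theorem NN.mul_m (x y : NN) :
    (x * y).m = x.m + y.m + fun i j => x.v i * y.v j := rfl
@[simp] theorem NN.one_v : (1 : NN).v = 0 := rfl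
@[simp] theorem NN.one_m : (1 : NN).m = 0 := rfl
@[simp] theorem NN.inv_v (x : NN) : x⁻¹.v = -x.v := rfl
@[simp] theorem NN.inv_m (x : NN) : x⁻¹.m = -x.m + fun i j => x.v i * x.v j := rfl

instance : Group NN where
  mul_assoc x y z := by ext i j <;> simp <;> ring
  one_mul x := by ext i j <;> simp
  mul_one x := by ext i j <;> simp
  inv_mul_cancel x := by ext i j <;> simp

theorem NN.comm_eq (x y : NN) :
    ⁅x, y⁆ = ⟨0, fun i j => x.v i * y.v j - y.v i * x.v j⟩ := by
  rw [commutatorElement_def]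
  ext i j <;> simp <;> ring

/-- hom F₄ → NN sending generators to basis vectors -/
def psiNN : FreeGroup (Fin 4) →* NN :=
  FreeGroup.lift fun i => ⟨fun j => if j = i then 1 else 0, 0⟩

theorem not_comm_in_free (u v : FreeGroup (Fin 4)) :
    ⁅FreeGroup.of (0:Fin 4), FreeGroup.of 1⁆ * ⁅FreeGroup.of (2:Fin 4), FreeGroup.of 3⁆ ≠ ⁅u, v⁆ := by
  intro h
  have h2 := congrArg psiNN h
  simp only [map_mul, map_commutatorElement] at h2
  simp only [psiNN, FreeGroup.lift_apply_of] at h2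
  rw [NN.comm_eq, NN.comm_eq, NN.comm_eq] at h2
  set a := (FreeGroup.lift fun i => (⟨fun j => if j = i then 1 else 0, 0⟩ : NN)) u with ha
  set b := (FreeGroup.lift fun i => (⟨fun j => if j = i then 1 else 0, 0⟩ : NN)) v with hb
  have hm := congrArg NN.m h2
  have e01 := congrFun (congrFun hm 0) 1
  have e23 := congrFun (congrFun hm 2) 3
  have e02 := congrFun (congrFun hm 0) 2
  have e03 := congrFun (congrFun hm 0) 3
  have e12 := congrFun (congrFun hm 1) 2
  have e13 := congrFun (congrFun hm 1) 3
  simp at e01 e23 e02 e03 e12 e13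
  have pluck : (a.v 0 * b.v 1 - b.v 0 * a.v 1) * (a.v 2 * b.v 3 - b.v 2 * a.v 3)
      - (a.v 0 * b.v 2 - b.v 0 * a.v 2) * (a.v 1 * b.v 3 - b.v 1 * a.v 3)
      + (a.v 0 * b.v 3 - b.v 0 * a.v 3) * (a.v 1 * b.v 2 - b.v 1 * a.v 2) = 0 := by ring
  rw [← e01, ← e23, ← e02, ← e03, ← e12, ← e13] at pluck
  norm_num at pluck

abbrev OSG3 : Type := OrientableSurfaceGroup 3

def T3a3 : OSG3 := PresentedGroup.of (Sum.inl 2)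
def T3b3 : OSG3 := PresentedGroup.of (Sum.inr 2)

/-- the relator, unfolded -/
theorem relator3_eq : orientableSurfaceRelator 3 =
    ⁅FreeGroup.of (Sum.inl 0 : Fin 3 ⊕ Fin 3), FreeGroup.of (Sum.inr 0)⁆ *
    (⁅FreeGroup.of (Sum.inl 1 : Fin 3 ⊕ Fin 3), FreeGroup.of (Sum.inr 1)⁆ *
    (⁅FreeGroup.of (Sum.inl 2 : Fin 3 ⊕ Fin 3), FreeGroup.of (Sum.inr 2)⁆ * 1)) := by
  simp [orientableSurfaceRelator, List.ofFn_succ]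

theorem rel3_one : ⁅S3a1, S3b1⁆ * ⁅S3a2, S3b2⁆ * ⁅T3a3, T3b3⁆ = 1 := by
  have h : PresentedGroup.mk _ (orientableSurfaceRelator 3) = (1 : OSG3) := by
    apply (QuotientGroup.eq_one_iff _).2
    exact Subgroup.subset_normalClosure (Set.mem_singleton _)
  have h2 : PresentedGroup.mk ({orientableSurfaceRelator 3} : Set (FreeGroup (Fin 3 ⊕ Fin 3)))
      (⁅FreeGroup.of (Sum.inl 0 : Fin 3 ⊕ Fin 3), FreeGroup.of (Sum.inr 0)⁆ *
      (⁅FreeGroup.of (Sum.inl 1 : Fin 3 ⊕ Fin 3), FreeGroup.of (Sum.inr 1)⁆ *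
      (⁅FreeGroup.of (Sum.inl 2 : Fin 3 ⊕ Fin 3), FreeGroup.of (Sum.inr 2)⁆ * 1))) = 1 := by
    rw [← relator3_eq]; exact h
  simpa [map_mul, map_commutatorElement, mul_assoc, S3a1, S3b1, S3a2, S3b2, T3a3, T3b3,
    PresentedGroup.of] using h2

noncomputable section HNNPart

abbrev F5 := FreeGroup (Fin 5)
def xg (i : Fin 5) : F5 := FreeGroup.of i
def cF : F5 := ⁅xg 0, xg 1⁆ * ⁅xg 2, xg 3⁆
def dF : F5 := cF⁻¹ * xg 4

def degF : F5 →* Multiplicative ℤ :=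
  FreeGroup.lift fun i => Multiplicative.ofAdd (if i = 4 then 1 else 0)

theorem degF_x4 : degF (xg 4) = Multiplicative.ofAdd 1 := by
  simp [degF, xg]

theorem degF_cF : degF cF = 1 := by
  rw [cF, map_mul, map_commutatorElement, map_commutatorElement]
  simp [commutatorElement_def, mul_comm]

theorem degF_dF : degF dF = Multiplicative.ofAdd 1 := by
  rw [dF, map_mul, map_inv, degF_cF, degF_x4]; simp

def f1 : Multiplicative ℤ →* F5 := zpowersHom F5 (xg 4)
def f2 : Multiplicative ℤ →* F5 := zpowersHom F5 dF

theorem degF_f1 (z : Multiplicative ℤ) : degF (f1 z) = z := by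
  simp [f1, zpowersHom_apply, map_zpow, degF_x4, ← ofAdd_zsmul]

theorem degF_f2 (z : Multiplicative ℤ) : degF (f2 z) = z := by
  simp [f2, zpowersHom_apply, map_zpow, degF_dF, ← ofAdd_zsmul]

theorem f1_inj : Function.Injective f1 := fun a b h => by
  have := congrArg degF h; rwa [degF_f1, degF_f1] at this

theorem f2_inj : Function.Injective f2 := fun a b h => by
  have := congrArg degF h; rwa [degF_f2, degF_f2] at this

def Asub : Subgroup F5 := f1.range
def Bsub : Subgroup F5 := f2.range

def e1 : Multiplicative ℤ ≃* Asub := MonoidHom.ofInjective f1_inj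
def e2 : Multiplicative ℤ ≃* Bsub := MonoidHom.ofInjective f2_inj

def phiAB : Asub ≃* Bsub := e1.symm.trans e2

theorem e1_coe (z : Multiplicative ℤ) : ((e1 z : Asub) : F5) = f1 z := rfl
theorem phi_e1 (z : Multiplicative ℤ) : ((phiAB (e1 z) : Bsub) : F5) = f2 z := by
  simp [phiAB]; rfl

abbrev HNN3 := HNNExtension F5 Asub Bsub phiAB

end HNNPart

noncomputable section Maps

def gmap : Fin 5 → OSG3 := ![S3a1, S3b1, S3a2, S3b2, T3b3]
def fG : F5 →* OSG3 := FreeGroup.lift gmap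

@[simp] theorem fG_x0 : fG (xg 0) = S3a1 := by simp [fG, xg, gmap]
@[simp] theorem fG_x1 : fG (xg 1) = S3b1 := by simp [fG, xg, gmap]
@[simp] theorem fG_x2 : fG (xg 2) = S3a2 := by simp [fG, xg, gmap]
@[simp] theorem fG_x3 : fG (xg 3) = S3b2 := by simp [fG, xg, gmap]
@[simp] theorem fG_x4 : fG (xg 4) = T3b3 := by simp [fG, xg, gmap]

theorem fG_cF : fG cF = ⁅S3a1, S3b1⁆ * ⁅S3a2, S3b2⁆ := by
  rw [cF, map_mul, map_commutatorElement, map_commutatorElement]; simp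

theorem comm3_eq : ⁅T3a3, T3b3⁆ = (⁅S3a1, S3b1⁆ * ⁅S3a2, S3b2⁆)⁻¹ :=
  calc ⁅T3a3, T3b3⁆
      = (⁅S3a1, S3b1⁆ * ⁅S3a2, S3b2⁆)⁻¹ * (⁅S3a1, S3b1⁆ * ⁅S3a2, S3b2⁆ * ⁅T3a3, T3b3⁆) := by
        group
    _ = (⁅S3a1, S3b1⁆ * ⁅S3a2, S3b2⁆)⁻¹ := by rw [rel3_one, mul_one]

theorem hconj : T3a3 * T3b3 * T3a3⁻¹ = (⁅S3a1, S3b1⁆ * ⁅S3a2, S3b2⁆)⁻¹ * T3b3 := by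
  have h := comm3_eq
  rw [commutatorElement_def] at h
  calc T3a3 * T3b3 * T3a3⁻¹ = (T3a3 * T3b3 * T3a3⁻¹ * T3b3⁻¹) * T3b3 := by group
    _ = _ := by rw [h]

theorem hxcond : ∀ a : Asub, T3a3 * fG ↑a = fG ↑(phiAB a) * T3a3 := by
  intro a
  obtain ⟨z, rfl⟩ := e1.surjective a
  rw [e1_coe, phi_e1]
  have hf1 : fG (f1 z) = T3b3 ^ Multiplicative.toAdd z := by
    rw [f1, zpowersHom_apply, map_zpow, fG_x4]
  have hf2 : fG (f2 z) = ((⁅S3a1, S3b1⁆ * ⁅S3a2, S3b2⁆)⁻¹ * T3b3) ^ Multiplicative.toAdd z := by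
    rw [f2, zpowersHom_apply, map_zpow, dF, map_mul, map_inv, fG_cF, fG_x4]
  rw [hf1, hf2, ← hconj]
  have : ∀ k : ℤ, (T3a3 * T3b3 * T3a3⁻¹) ^ k = T3a3 * T3b3 ^ k * T3a3⁻¹ := by
    intro k
    have := map_zpow (MulAut.conj T3a3).toMonoidHom T3b3 k
    simpa [MulAut.conj_apply] using this.symm
  rw [this]
  group

def Phi : HNN3 →* OSG3 := HNNExtension.lift fG T3a3 hxcond

def pmap : Fin 3 ⊕ Fin 3 → HNN3 :=
  Sum.elim ![HNNExtension.of (xg 0), HNNExtension.of (xg 2), HNNExtension.t]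
    ![HNNExtension.of (xg 1), HNNExtension.of (xg 3), HNNExtension.of (xg 4)]

theorem t_of_x4 : (HNNExtension.t : HNN3) * HNNExtension.of (xg 4) =
    HNNExtension.of dF * HNNExtension.t := by
  have h := HNNExtension.t_mul_of (φ := phiAB) (e1 (Multiplicative.ofAdd 1))
  rw [e1_coe, phi_e1] at h
  simpa [f1, f2, zpowersHom_apply] using h

theorem comm_t_x4 : ⁅(HNNExtension.t : HNN3), (HNNExtension.of (xg 4) : HNN3)⁆ =
    (HNNExtension.of cF⁻¹ : HNN3) := by
  rw [commutatorElement_def]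
  have : (HNNExtension.t : HNN3) * HNNExtension.of (xg 4) * HNNExtension.t⁻¹ =
      HNNExtension.of dF := by rw [t_of_x4]; group
  rw [this, ← map_inv, ← map_mul, dF]
  congr 1
  group

theorem hrel : ∀ r ∈ ({orientableSurfaceRelator 3} : Set (FreeGroup (Fin 3 ⊕ Fin 3))),
    FreeGroup.lift pmap r = 1 := by
  intro r hr
  rw [Set.mem_singleton_iff] at hr
  subst hr
  rw [relator3_eq]
  simp only [map_mul, map_commutatorElement, map_one, FreeGroup.lift_apply_of, mul_one]
  have p0 : pmap (Sum.inl 0) = HNNExtension.of (xg 0) := rfl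
  have p1 : pmap (Sum.inr 0) = HNNExtension.of (xg 1) := rfl
  have p2 : pmap (Sum.inl 1) = HNNExtension.of (xg 2) := rfl
  have p3 : pmap (Sum.inr 1) = HNNExtension.of (xg 3) := rfl
  have p4 : pmap (Sum.inl 2) = (HNNExtension.t : HNN3) := rfl
  have p5 : pmap (Sum.inr 2) = HNNExtension.of (xg 4) := rfl
  rw [p0, p1, p2, p3, p4, p5, comm_t_x4, ← map_commutatorElement, ← map_commutatorElement,
    ← map_mul, ← map_mul,
    show ⁅xg 0, xg 1⁆ * (⁅xg 2, xg 3⁆ * cF⁻¹) = 1 by rw [cF]; group, map_one]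

def Psi : OSG3 →* HNN3 := PresentedGroup.toGroup hrel

theorem Phi_Psi : ∀ x : OSG3, Phi (Psi x) = x := by
  have : Phi.comp Psi = MonoidHom.id OSG3 := by
    apply PresentedGroup.ext
    rintro (i | i) <;> fin_cases i <;>
      simp [Psi, Phi, PresentedGroup.toGroup.of, pmap] <;> rfl
  exact fun x => congrArg (fun f => f x) this ▸ (DFunLike.congr_fun this x)

theorem Psi_inj : Function.Injective Psi :=
  Function.LeftInverse.injective Phi_Psi

end Maps

section Inj

def jmap : FreeGroup (Fin 4) →* F5 :=
  FreeGroup.lift fun i => FreeGroup.of (Fin.castSucc i)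

theorem jmap_inj : Function.Injective jmap := by
  have hretr : (FreeGroup.lift fun i : Fin 5 =>
      if h : (i : ℕ) < 4 then FreeGroup.of (⟨i, h⟩ : Fin 4) else 1).comp jmap =
      MonoidHom.id (FreeGroup (Fin 4)) := by
    apply FreeGroup.ext_hom
    intro a
    simp [jmap]
  intro x y h
  have := congrArg (FreeGroup.lift fun i : Fin 5 =>
      if h : (i : ℕ) < 4 then FreeGroup.of (⟨i, h⟩ : Fin 4) else 1) h
  rwa [← MonoidHom.comp_apply, ← MonoidHom.comp_apply, hretr, MonoidHom.id_apply,
    MonoidHom.id_apply] at this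

def L4 : FreeGroup (Fin 4) →* OSG3 := FreeGroup.lift ![S3a1, S3b1, S3a2, S3b2]

theorem Psi_L4 : Psi.comp L4 = HNNExtension.of.comp jmap := by
  apply FreeGroup.ext_hom
  intro i
  fin_cases i <;>
    simp [L4, jmap, Psi, PresentedGroup.toGroup.of, S3a1, S3b1, S3a2, S3b2, pmap] <;> rfl

theorem L4_inj : Function.Injective ⇑L4 := by
  intro x y h
  have h2 : (HNNExtension.of (jmap x) : HNN3) = HNNExtension.of (jmap y) := by
    have := congrArg Psi h
    rwa [← MonoidHom.comp_apply, ← MonoidHom.comp_apply, Psi_L4, MonoidHom.comp_apply,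
      MonoidHom.comp_apply] at this
  exact jmap_inj (HNNExtension.of_injective (φ := phiAB) h2)

end Inj


section Facts

theorem closure_eq_range :
    (Subgroup.closure {S3a1, S3b1, S3a2, S3b2} : Subgroup OSG3) = L4.range := by
  rw [L4, FreeGroup.range_lift_eq_closure]
  congr 1
  ext x
  constructor
  · intro hx
    simp only [Set.mem_insert_iff, Set.mem_singleton_iff] at hx
    rcases hx with h | h | h | h
    · exact ⟨0, by simp [h]⟩
    · exact ⟨1, by simp [h]⟩
    · exact ⟨2, by simp [h]⟩
    · exact ⟨3, by simp [h]⟩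
  · rintro ⟨i, rfl⟩
    fin_cases i <;> simp [Set.mem_insert_iff]

theorem fact3 : ∃ u v : OSG3, ⁅S3a1, S3b1⁆ * ⁅S3a2, S3b2⁆ = ⁅u, v⁆ :=
  ⟨T3b3, T3a3, by rw [show ⁅T3b3, T3a3⁆ = ⁅T3a3, T3b3⁆⁻¹ from (commutatorElement_inv _ _).symm, comm3_eq, inv_inv]⟩

theorem fact4 : ¬ ∃ u v : OSG3,
    u ∈ Subgroup.closure {S3a1, S3b1, S3a2, S3b2} ∧
    v ∈ Subgroup.closure {S3a1, S3b1, S3a2, S3b2} ∧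
    ⁅S3a1, S3b1⁆ * ⁅S3a2, S3b2⁆ = ⁅u, v⁆ := by
  rintro ⟨u, v, hu, hv, h⟩
  rw [closure_eq_range] at hu hv
  obtain ⟨u', rfl⟩ := hu
  obtain ⟨v', rfl⟩ := hv
  have hw0 : L4 (⁅FreeGroup.of (0 : Fin 4), FreeGroup.of 1⁆ * ⁅FreeGroup.of (2 : Fin 4), FreeGroup.of 3⁆) =
      ⁅S3a1, S3b1⁆ * ⁅S3a2, S3b2⁆ := by
    rw [map_mul, map_commutatorElement, map_commutatorElement]
    simp [L4]
  rw [← hw0, ← map_commutatorElement] at h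
  exact not_comm_in_free u' v' (L4_inj h)

theorem cG_mem : ⁅S3a1, S3b1⁆ * ⁅S3a2, S3b2⁆ ∈
    (Subgroup.closure {S3a1, S3b1, S3a2, S3b2} : Subgroup OSG3) := by
  have h1 : S3a1 ∈ Subgroup.closure ({S3a1, S3b1, S3a2, S3b2} : Set OSG3) :=
    Subgroup.subset_closure (by simp)
  have h2 : S3b1 ∈ Subgroup.closure ({S3a1, S3b1, S3a2, S3b2} : Set OSG3) :=
    Subgroup.subset_closure (by simp)
  have h3 : S3a2 ∈ Subgroup.closure ({S3a1, S3b1, S3a2, S3b2} : Set OSG3) :=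
    Subgroup.subset_closure (by simp)
  have h4 : S3b2 ∈ Subgroup.closure ({S3a1, S3b1, S3a2, S3b2} : Set OSG3) :=
    Subgroup.subset_closure (by simp)
  rw [commutatorElement_def, commutatorElement_def]
  exact mul_mem (mul_mem (mul_mem (mul_mem h1 h2) (inv_mem h1)) (inv_mem h2))
    (mul_mem (mul_mem (mul_mem h3 h4) (inv_mem h3)) (inv_mem h4))

theorem fact2 : ¬ (Subgroup.closure {S3a1, S3b1, S3a2, S3b2} :
    Subgroup OSG3).IsElementarilyEmbedded := by
  intro hel
  set H : Subgroup OSG3 := Subgroup.closure {S3a1, S3b1, S3a2, S3b2} with hH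
  set cG : OSG3 := ⁅S3a1, S3b1⁆ * ⁅S3a2, S3b2⁆ with hcG
  have hmem : cG ∈ H := cG_mem
  have key := hel 1 commFormula (fun _ : Fin 1 => (⟨cG, hmem⟩ : H))
  have hGside : commFormula.Realize (fun _ : Fin 1 => cG) := by
    obtain ⟨u, v, huv⟩ := fact3
    exact (commFormula_realize cG).mpr ⟨u, v, by rw [hcG, huv, commutatorElement_def]⟩
  have hHside : commFormula.Realize (fun _ : Fin 1 => (⟨cG, hmem⟩ : H)) := key.mpr hGside
  obtain ⟨u, v, huv⟩ := (commFormula_realize (⟨cG, hmem⟩ : H)).mp hHside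
  refine fact4 ⟨(u : OSG3), (v : OSG3), u.2, v.2, ?_⟩
  have := congrArg (Subtype.val) huv
  rw [commutatorElement_def (u : OSG3)]
  exact this

end Facts

/-- In `π₁(S₃) = ⟨a₁,b₁,a₂,b₂,a₃,b₃ ∣ [a₁,b₁][a₂,b₂][a₃,b₃] = 1⟩`, the subgroup `H`
generated by the images of `a₁, b₁, a₂, b₂` is freely generated by these four elements,
but it is not elementarily embedded: the element `[a₁,b₁][a₂,b₂]` is a commutator in
`π₁(S₃)` but not in `H`. -/
theorem genus_three_subgroup_not_elementarilyEmbedded :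
    Function.Injective
        ⇑(FreeGroup.lift (![S3a1, S3b1, S3a2, S3b2] : Fin 4 → OrientableSurfaceGroup 3)) ∧
      ¬ (Subgroup.closure {S3a1, S3b1, S3a2, S3b2} :
          Subgroup (OrientableSurfaceGroup 3)).IsElementarilyEmbedded ∧
      (∃ u v : OrientableSurfaceGroup 3, ⁅S3a1, S3b1⁆ * ⁅S3a2, S3b2⁆ = ⁅u, v⁆) ∧
      ¬ ∃ u v : OrientableSurfaceGroup 3,
          u ∈ Subgroup.closure {S3a1, S3b1, S3a2, S3b2} ∧
          v ∈ Subgroup.closure {S3a1, S3b1, S3a2, S3b2} ∧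
          ⁅S3a1, S3b1⁆ * ⁅S3a2, S3b2⁆ = ⁅u, v⁆ :=
  ⟨L4_inj, fact2, fact3, fact4⟩
end

section
/- In the free group F₄ with free basis e₁, e₂, e₃, e₄, the element [e₁,e₂][e₃,e₄] is not a commutator: there exist no elements u, v ∈ F₄ with [e₁,e₂][e₃,e₄] = [u,v]. -/
open scoped commutatorElement

/-- Heisenberg-type group: ℤ⁴ with a full tensor cocycle. -/
def HG : Type := (Fin 4 → ℤ) × (Fin 4 → Fin 4 → ℤ)

instance : Group HG where
  mul x y := (x.1 + y.1, fun i j => x.2 i j + y.2 i j + x.1 i * y.1 j)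
  one := (0, 0)
  inv x := (-x.1, fun i j => -x.2 i j + x.1 i * x.1 j)
  mul_assoc a b c := by
    refine Prod.ext ?_ ?_
    · show a.1 + b.1 + c.1 = a.1 + (b.1 + c.1); ring
    · funext i j
      show (a.2 i j + b.2 i j + a.1 i * b.1 j) + c.2 i j + (a.1 + b.1) i * c.1 j
        = a.2 i j + (b.2 i j + c.2 i j + b.1 i * c.1 j) + a.1 i * (b.1 + c.1) j
      simp only [Pi.add_apply]; ring
  one_mul a := by
    refine Prod.ext ?_ ?_
    · show 0 + a.1 = a.1; simp
    · funext i j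
      show (0:Fin 4 → Fin 4 → ℤ) i j + a.2 i j + (0:Fin 4 → ℤ) i * a.1 j = a.2 i j
      simp
  mul_one a := by
    refine Prod.ext ?_ ?_
    · show a.1 + 0 = a.1; simp
    · funext i j
      show a.2 i j + (0:Fin 4 → Fin 4 → ℤ) i j + a.1 i * (0:Fin 4 → ℤ) j = a.2 i j
      simp
  inv_mul_cancel a := by
    refine Prod.ext ?_ ?_
    · show -a.1 + a.1 = 0; simp
    · funext i j
      show (-a.2 i j + a.1 i * a.1 j) + a.2 i j + (-a.1) i * a.1 j = (0:Fin 4 → Fin 4 → ℤ) i j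
      simp only [Pi.neg_apply, Pi.zero_apply]; ring

lemma HG.mul_fst (x y : HG) : (x * y).1 = x.1 + y.1 := rfl
lemma HG.mul_snd (x y : HG) (i j : Fin 4) :
    (x * y).2 i j = x.2 i j + y.2 i j + x.1 i * y.1 j := rfl
lemma HG.inv_fst (x : HG) : (x⁻¹).1 = -x.1 := rfl
lemma HG.inv_snd (x : HG) (i j : Fin 4) : (x⁻¹).2 i j = -x.2 i j + x.1 i * x.1 j := rfl

lemma HG.comm_fst (x y : HG) (i : Fin 4) : (⁅x, y⁆).1 i = 0 := by
  show ((x * y) * x⁻¹ * y⁻¹).1 i = 0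
  simp only [HG.mul_fst, HG.inv_fst, Pi.add_apply, Pi.neg_apply]
  ring

lemma HG.comm_snd (x y : HG) (i j : Fin 4) :
    (⁅x, y⁆).2 i j = x.1 i * y.1 j - y.1 i * x.1 j := by
  show ((x * y) * x⁻¹ * y⁻¹).2 i j = _
  simp only [HG.mul_snd, HG.inv_snd, HG.mul_fst, HG.inv_fst, Pi.add_apply, Pi.neg_apply]
  ring

/-- In the free group `F₄` with free basis `e₁, e₂, e₃, e₄`, the element
`[e₁,e₂][e₃,e₄]` (where `⁅a,b⁆ = a*b*a⁻¹*b⁻¹`) is not a commutator. -/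
theorem not_commutator_in_freeGroup_four :
    ¬ ∃ u v : FreeGroup (Fin 4),
        ⁅FreeGroup.of (0 : Fin 4), FreeGroup.of (1 : Fin 4)⁆ *
            ⁅FreeGroup.of (2 : Fin 4), FreeGroup.of (3 : Fin 4)⁆ = ⁅u, v⁆ := by
  rintro ⟨u, v, h⟩
  set φ : FreeGroup (Fin 4) →* HG :=
    FreeGroup.lift (fun i => ((fun j => if i = j then 1 else 0), 0))
  have e : ∀ i : Fin 4, (φ (FreeGroup.of i)).1 = fun j => if i = j then 1 else 0 := by
    intro i; exact congrArg Prod.fst (FreeGroup.lift_apply_of (β := HG))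
  have h2 := congrArg φ h
  rw [map_mul, map_commutatorElement, map_commutatorElement, map_commutatorElement] at h2
  set a : Fin 4 → ℤ := (φ u).1
  set b : Fin 4 → ℤ := (φ v).1
  have key : ∀ i j : Fin 4,
      (φ (FreeGroup.of 0)).1 i * (φ (FreeGroup.of 1)).1 j
        - (φ (FreeGroup.of 1)).1 i * (φ (FreeGroup.of 0)).1 j
      + ((φ (FreeGroup.of 2)).1 i * (φ (FreeGroup.of 3)).1 j
        - (φ (FreeGroup.of 3)).1 i * (φ (FreeGroup.of 2)).1 j)
      = a i * b j - b i * a j := by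
    intro i j
    have := congrArg (fun z : HG => z.2 i j) h2
    simp only [HG.mul_snd, HG.comm_snd, HG.comm_fst] at this
    linarith [this]
  have h01 := key 0 1
  have h23 := key 2 3
  have h02 := key 0 2
  have h13 := key 1 3
  have h03 := key 0 3
  have h12 := key 1 2
  simp only [e, show ((0:Fin 4)=0)=True by simp, show ((1:Fin 4)=1)=True by simp,
    show ((2:Fin 4)=2)=True by simp, show ((3:Fin 4)=3)=True by simp,
    show ((0:Fin 4)=1)=False by decide, show ((1:Fin 4)=0)=False by decide,
    show ((0:Fin 4)=2)=False by decide, show ((2:Fin 4)=0)=False by decide,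
    show ((0:Fin 4)=3)=False by decide, show ((3:Fin 4)=0)=False by decide,
    show ((1:Fin 4)=2)=False by decide, show ((2:Fin 4)=1)=False by decide,
    show ((1:Fin 4)=3)=False by decide, show ((3:Fin 4)=1)=False by decide,
    show ((2:Fin 4)=3)=False by decide, show ((3:Fin 4)=2)=False by decide,
    if_true, if_false] at h01 h23 h02 h13 h03 h12
  norm_num at h01 h23 h02 h13 h03 h12
  have : (1:ℤ) = 0 := by
    linear_combination (a 2 * b 3 - b 2 * a 3) * h01 + h23 - (a 1 * b 3 - b 1 * a 3) * h02 + (a 1 * b 2 - b 1 * a 2) * h03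
  exact one_ne_zero this
end

section
/- A group G is CSA if and only if G is commutative transitive and, for all a, t ∈ G with a ≠ 1, if tat⁻¹ commutes with a then t commutes with a. -/
/-- A subgroup `M` of a group `G` is *malnormal* if for every `g ∉ M` the intersection
`gMg⁻¹ ∩ M` is trivial (an element `y` lies in `gMg⁻¹` iff `g⁻¹ * y * g ∈ M`). -/
def Subgroup.IsMalnormal {G : Type*} [Group G] (M : Subgroup G) : Prop :=
  ∀ g : G, g ∉ M → ∀ y : G, y ∈ M → g⁻¹ * y * g ∈ M → y = 1

/-- A subgroup is a *maximal abelian subgroup* if it is abelian and not properly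
contained in any abelian subgroup. -/
def Subgroup.IsMaximalAbelian {G : Type*} [Group G] (M : Subgroup G) : Prop :=
  (∀ x ∈ M, ∀ y ∈ M, Commute x y) ∧
    ∀ N : Subgroup G, (∀ x ∈ N, ∀ y ∈ N, Commute x y) → M ≤ N → N = M

/-- A group is *CSA* if every maximal abelian subgroup is malnormal. -/
def IsCSA (G : Type*) [Group G] : Prop :=
  ∀ M : Subgroup G, M.IsMaximalAbelian → M.IsMalnormal

/-- A group is *commutative transitive* if commutation is transitive on non-identity
elements. -/
def IsCommutativeTransitive (G : Type*) [Group G] : Prop :=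
  ∀ x y z : G, x ≠ 1 → y ≠ 1 → z ≠ 1 → Commute x y → Commute y z → Commute x z

/-- Every element lies in some maximal abelian subgroup (Zorn's lemma). -/
lemma exists_maximalAbelian_mem {G : Type*} [Group G] (a : G) :
    ∃ M : Subgroup G, M.IsMaximalAbelian ∧ a ∈ M := by
  set s : Set (Subgroup G) := {H | ∀ x ∈ H, ∀ y ∈ H, Commute x y} with hs
  obtain ⟨M, hle, hMs, hmax⟩ := zorn_le_nonempty₀ s
    (fun c hcs hchain y hy => by
      refine ⟨sSup c, ?_, fun z hz => le_sSup hz⟩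
      intro x hx y' hy'
      rw [Subgroup.mem_sSup_of_directedOn ⟨y, hy⟩ hchain.directedOn] at hx hy'
      obtain ⟨S, hS, hxS⟩ := hx
      obtain ⟨T, hT, hyT⟩ := hy'
      rcases hchain.total hS hT with h | h
      · exact hcs hT x (h hxS) y' hyT
      · exact hcs hS x hxS y' (h hyT))
    (Subgroup.zpowers a)
    (fun x hx y hy => by
      obtain ⟨m, rfl⟩ := Subgroup.mem_zpowers_iff.mp hx
      obtain ⟨n, rfl⟩ := Subgroup.mem_zpowers_iff.mp hy
      exact (Commute.refl a).zpow_zpow m n)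
  exact ⟨M, ⟨hMs, fun N hN hMN => le_antisymm (hmax hN hMN) hMN⟩,
    hle (Subgroup.mem_zpowers a)⟩

/-- A group `G` is CSA if and only if it is commutative transitive and, whenever
`t * a * t⁻¹` commutes with `a` for some `a ≠ 1`, then `t` commutes with `a`. -/
theorem isCSA_iff (G : Type*) [Group G] :
    IsCSA G ↔
      IsCommutativeTransitive G ∧
        ∀ a t : G, a ≠ 1 → Commute (t * a * t⁻¹) a → Commute t a := by
  constructor
  · intro hcsa
    -- key step: if `y ∈ M` is nontrivial and `x⁻¹ * y * x ∈ M`, then `x ∈ M`.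
    have key : ∀ (M : Subgroup G), M.IsMaximalAbelian → ∀ y ∈ M, y ≠ 1 →
        ∀ x : G, x⁻¹ * y * x ∈ M → x ∈ M := by
      intro M hM y hy hy1 x hconj
      by_contra hx
      exact hy1 (hcsa M hM x hx y hy hconj)
    have conj_eq : ∀ x y : G, Commute x y → x⁻¹ * y * x = y := by
      intro x y hxy
      rw [mul_assoc, ← hxy.eq, ← mul_assoc, inv_mul_cancel, one_mul]
    constructor
    · intro x y z hx hy hz hxy hyz
      obtain ⟨M, hM, hyM⟩ := exists_maximalAbelian_mem y
      have hxM : x ∈ M := key M hM y hyM hy x (by rw [conj_eq x y hxy]; exact hyM)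
      have hzM : z ∈ M := key M hM y hyM hy z (by rw [conj_eq z y hyz.symm]; exact hyM)
      exact hM.1 x hxM z hzM
    · intro a t ha h
      obtain ⟨M, hM, haM⟩ := exists_maximalAbelian_mem a
      have hbM : t * a * t⁻¹ ∈ M :=
        key M hM a haM ha _ (by rw [conj_eq _ a h]; exact haM)
      have htM : t⁻¹ ∈ M :=
        key M hM a haM ha t⁻¹ (by rw [inv_inv]; exact hbM)
      exact hM.1 t (by simpa using M.inv_mem htM) a haM
  · rintro ⟨hct, hcond⟩ M hM g hgM y hyM hconj
    by_contra hy1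
    -- `g⁻¹ * y * g` commutes with `y` since both lie in the abelian `M`.
    have h1 : Commute (g⁻¹ * y * g) y := hM.1 _ hconj y hyM
    have h2 : Commute g⁻¹ y := by
      apply hcond y g⁻¹ hy1
      rwa [inv_inv]
    have hgy : Commute g y := by simpa using h2.inv_left
    have hg1 : g ≠ 1 := fun h => hgM (h ▸ M.one_mem)
    -- the centralizer of `y` is abelian by commutative transitivity
    set N := Subgroup.centralizer ({y} : Set G) with hN
    have hNab : ∀ x ∈ N, ∀ z ∈ N, Commute x z := by
      intro x hx z hz
      rcases eq_or_ne x 1 with rfl | hx1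
      · exact Commute.one_left z
      rcases eq_or_ne z 1 with rfl | hz1
      · exact Commute.one_right x
      have hxy : Commute x y :=
        ((Subgroup.mem_centralizer_iff.mp hx) y (Set.mem_singleton y)).symm
      have hzy : Commute y z :=
        (Subgroup.mem_centralizer_iff.mp hz) y (Set.mem_singleton y)
      exact hct x y z hx1 hy1 hz1 hxy hzy
    have hMN : M ≤ N := by
      intro x hx
      refine Subgroup.mem_centralizer_iff.mpr fun h hh => ?_
      rw [Set.mem_singleton_iff] at hh
      rw [hh]
      exact (hM.1 x hx y hyM).symm.eq
    have hNM : N = M := hM.2 N hNab hMN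
    have hgN : g ∈ N := by
      refine Subgroup.mem_centralizer_iff.mpr fun h hh => ?_
      rw [Set.mem_singleton_iff] at hh
      rw [hh]
      exact hgy.symm.eq
    exact hgM (hNM ▸ hgN)
end
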